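/- Let ŵ : (0,1] → ℝ be nonnegative with 4π ∫₀¹ r³ ŵ(r) dr = 3 and 4π ∫₀¹ r⁵ ŵ(r) dr ≤ 4π ∫₀¹ r³ ŵ(r) dr. Define b_δ(ξ) = (4π/δ) ∫₀^{π/2} cos φ sin φ ∫₀¹ r² ŵ(r) sin(r cos(φ) δ|ξ|) dr dφ for ξ ∈ ℝ³. Then for all ξ with 0 < δ|ξ| ≤ 1, |ξ| ≥ b_δ(ξ) ≥ |ξ| − (δ|ξ|)²|ξ|/10 > (1/2)|ξ|. -/

import Mathlib

open MeasureTheory intervalIntegral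

lemma my_sin_ge_sub_cube {x : ℝ} (hx : 0 ≤ x) : x - x ^ 3 / 6 ≤ Real.sin x := by
  have key : ∀ y : ℝ, HasDerivAt (fun t => Real.sin t - t + t ^ 3 / 6)
      (Real.cos y - 1 + y ^ 2 / 2) y := by
    intro y
    have h1 := ((Real.hasDerivAt_sin y).sub (hasDerivAt_id y)).add
      ((hasDerivAt_pow 3 y).div_const 6)
    convert h1 using 1
    rfl
    rfl
    rfl
    simp
    ring
  have hmono : Monotone (fun t => Real.sin t - t + t ^ 3 / 6) := by
    apply monotone_of_deriv_nonneg (fun y => (key y).differentiableAt)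
    intro y
    rw [(key y).deriv]
    nlinarith [Real.one_sub_sq_div_two_le_cos (x := y)]
  have h0 := hmono hx
  simp only [Real.sin_zero] at h0
  norm_num at h0
  linarith

lemma my_int_cos2_sin : ∫ φ in (0:ℝ)..(Real.pi/2), Real.cos φ ^ 2 * Real.sin φ = 1/3 := by
  have key : ∀ y ∈ Set.uIcc (0:ℝ) (Real.pi/2), HasDerivAt (fun t => -(Real.cos t ^ 3) / 3)
      (Real.cos y ^ 2 * Real.sin y) y := by
    intro y _
    have h := (((Real.hasDerivAt_cos y).pow 3).neg).div_const 3
    convert h using 1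
    rfl
    rfl
    rfl
    simp
    ring
  rw [intervalIntegral.integral_eq_sub_of_hasDerivAt key
    (Continuous.intervalIntegrable (by continuity) _ _)]
  simp [Real.cos_pi_div_two]
  norm_num

lemma my_int_cos4_sin : ∫ φ in (0:ℝ)..(Real.pi/2), Real.cos φ ^ 4 * Real.sin φ = 1/5 := by
  have key : ∀ y ∈ Set.uIcc (0:ℝ) (Real.pi/2), HasDerivAt (fun t => -(Real.cos t ^ 5) / 5)
      (Real.cos y ^ 4 * Real.sin y) y := by
    intro y _
    have h := (((Real.hasDerivAt_cos y).pow 5).neg).div_const 5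
    convert h using 1
    rfl
    rfl
    rfl
    simp
    ring
  rw [intervalIntegral.integral_eq_sub_of_hasDerivAt key
    (Continuous.intervalIntegrable (by continuity) _ _)]
  simp [Real.cos_pi_div_two]
  norm_num

theorem gradient_symbol_bounds (w : ℝ → ℝ)
    (hw : ∀ r ∈ Set.Ioc (0 : ℝ) 1, 0 ≤ w r)
    (hnorm : 4 * Real.pi * ∫ r in (0:ℝ)..1, r ^ 3 * w r = 3)
    (hmom : 4 * Real.pi * ∫ r in (0:ℝ)..1, r ^ 5 * w r ≤
      4 * Real.pi * ∫ r in (0:ℝ)..1, r ^ 3 * w r)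
    (δ : ℝ) (hδ : 0 < δ) (ξ : EuclideanSpace ℝ (Fin 3))
    (hξ0 : 0 < δ * ‖ξ‖) (hξ1 : δ * ‖ξ‖ ≤ 1) :
    ‖ξ‖ ≥ (4 * Real.pi / δ) *
        ∫ φ in (0:ℝ)..(Real.pi / 2), Real.cos φ * Real.sin φ *
          ∫ r in (0:ℝ)..1, r ^ 2 * w r * Real.sin (r * Real.cos φ * (δ * ‖ξ‖)) ∧
      (4 * Real.pi / δ) *
          ∫ φ in (0:ℝ)..(Real.pi / 2), Real.cos φ * Real.sin φ *
            ∫ r in (0:ℝ)..1, r ^ 2 * w r * Real.sin (r * Real.cos φ * (δ * ‖ξ‖))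
        ≥ ‖ξ‖ - (δ * ‖ξ‖) ^ 2 * ‖ξ‖ / 10 ∧
      ‖ξ‖ - (δ * ‖ξ‖) ^ 2 * ‖ξ‖ / 10 > (1 / 2) * ‖ξ‖ := by
  have hπ := Real.pi_pos
  set a := δ * ‖ξ‖ with ha_def
  have hξpos : 0 < ‖ξ‖ := by
    rcases (norm_nonneg ξ).lt_or_eq with h | h
    · exact h
    · exfalso; rw [ha_def, ← h, mul_zero] at hξ0; exact lt_irrefl 0 hξ0
  set I3 := ∫ r in (0:ℝ)..1, r ^ 3 * w r with hI3_def
  set I5 := ∫ r in (0:ℝ)..1, r ^ 5 * w r with hI5_def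
  -- integrability of r^3 * w r
  have hI3 : IntervalIntegrable (fun r => r ^ 3 * w r) volume 0 1 := by
    by_contra h
    rw [hI3_def, intervalIntegral.integral_undef h, mul_zero] at hnorm
    norm_num at hnorm
  have hIoc : Set.uIoc (0:ℝ) 1 = Set.Ioc (0:ℝ) 1 := Set.uIoc_of_le (by norm_num)
  have hmes : AEStronglyMeasurable (fun r => r ^ 3 * w r)
      (volume.restrict (Set.Ioc (0:ℝ) 1)) := hI3.1.aestronglyMeasurable
  have hae : ∀ᵐ r ∂(volume.restrict (Set.Ioc (0:ℝ) 1)), r ∈ Set.Ioc (0:ℝ) 1 :=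
    ae_restrict_mem measurableSet_Ioc
  -- a.e. strong measurability of the inner integrand
  have hfm : ∀ c : ℝ, AEStronglyMeasurable (fun r => r ^ 2 * w r * Real.sin (r * c * a))
      (volume.restrict (Set.Ioc (0:ℝ) 1)) := by
    intro c
    have hm2 : AEStronglyMeasurable (fun r : ℝ => (r ^ 3 * w r) * (r⁻¹ * Real.sin (r * c * a)))
        (volume.restrict (Set.Ioc (0:ℝ) 1)) := by
      refine hmes.mul (Measurable.aestronglyMeasurable ?_)
      exact measurable_id.inv.mul
        ((Real.continuous_sin.comp ((continuous_id.mul continuous_const).mul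
          continuous_const)).measurable)
    refine hm2.congr ?_
    filter_upwards [hae] with r hr
    have hr0 : r ≠ 0 := ne_of_gt hr.1
    field_simp
  -- pointwise bound
  have habs : ∀ c : ℝ, |c| ≤ 1 → ∀ r ∈ Set.Ioc (0:ℝ) 1,
      ‖r ^ 2 * w r * Real.sin (r * c * a)‖ ≤ r ^ 3 * w r := by
    intro c hc r hr
    have hw0 := hw r hr
    have h1 : |Real.sin (r * c * a)| ≤ |r * c * a| := Real.abs_sin_le_abs
    have h2 : |r * c * a| = r * |c| * a := by
      rw [abs_mul, abs_mul, abs_of_pos hr.1, abs_of_pos hξ0]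
    rw [Real.norm_eq_abs, abs_mul,
      abs_of_nonneg (mul_nonneg (pow_nonneg hr.1.le 2) hw0)]
    have h3 : r ^ 2 * w r * |Real.sin (r * c * a)| ≤ r ^ 2 * w r * (r * |c| * a) := by
      rw [← h2]
      exact mul_le_mul_of_nonneg_left h1 (mul_nonneg (pow_nonneg hr.1.le 2) hw0)
    have h4 : r ^ 2 * w r * (r * |c| * a) ≤ r ^ 3 * w r := by
      nlinarith [mul_nonneg (mul_nonneg (pow_nonneg hr.1.le 3) hw0) (abs_nonneg c),
        mul_nonneg (pow_nonneg hr.1.le 3) hw0, abs_nonneg c, hξ0, hξ1]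
    linarith
  -- continuity of the inner integral in φ
  have hFcont : Continuous (fun φ =>
      ∫ r in (0:ℝ)..1, r ^ 2 * w r * Real.sin (r * Real.cos φ * a)) := by
    apply intervalIntegral.continuous_of_dominated_interval
      (bound := fun r => r ^ 3 * w r)
    · intro φ; rw [hIoc]; exact hfm (Real.cos φ)
    · intro φ
      filter_upwards with r hr
      rw [hIoc] at hr
      exact habs (Real.cos φ) (Real.abs_cos_le_one φ) r hr
    · exact hI3
    · filter_upwards with r _
      exact (continuous_const.mul (Real.continuous_sin.comp
        ((continuous_const.mul Real.continuous_cos).mul continuous_const)))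
  -- interval integrability of the inner integrand
  have hfint : ∀ φ : ℝ, IntervalIntegrable
      (fun r => r ^ 2 * w r * Real.sin (r * Real.cos φ * a)) volume 0 1 := by
    intro φ
    apply hI3.mono_fun (by rw [hIoc]; exact hfm (Real.cos φ))
    rw [hIoc]
    filter_upwards [hae] with r hr
    have h := habs (Real.cos φ) (Real.abs_cos_le_one φ) r hr
    have : ‖r ^ 3 * w r‖ = r ^ 3 * w r := by
      rw [Real.norm_eq_abs, abs_of_nonneg (mul_nonneg (pow_nonneg hr.1.le 3) (hw r hr))]
    rw [this]
    exact h
  -- integrability of r^5 * w r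
  have hI5i : IntervalIntegrable (fun r => r ^ 5 * w r) volume 0 1 := by
    apply hI3.mono_fun
    · rw [hIoc]
      refine AEStronglyMeasurable.congr ((Continuous.aestronglyMeasurable
        (continuous_pow 2)).mul hmes) ?_
      filter_upwards with r
      simp only [Pi.mul_apply]
      ring
    · rw [hIoc]
      filter_upwards [hae] with r hr
      have hw0 := hw r hr
      rw [Real.norm_eq_abs, Real.norm_eq_abs,
        abs_of_nonneg (mul_nonneg (pow_nonneg hr.1.le 5) hw0),
        abs_of_nonneg (mul_nonneg (pow_nonneg hr.1.le 3) hw0)]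
      exact mul_le_mul_of_nonneg_right
        (pow_le_pow_of_le_one hr.1.le hr.2 (by norm_num)) hw0
  -- inner upper bound
  have hupper : ∀ φ ∈ Set.Icc (0:ℝ) (Real.pi/2),
      (∫ r in (0:ℝ)..1, r ^ 2 * w r * Real.sin (r * Real.cos φ * a))
        ≤ I3 * (Real.cos φ * a) := by
    intro φ hφ
    have step := intervalIntegral.integral_mono_on (by norm_num : (0:ℝ) ≤ 1) (hfint φ)
      (hI3.mul_const (Real.cos φ * a)) ?_
    · rw [intervalIntegral.integral_mul_const] at step
      exact step
    · intro r hr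
      rcases hr.1.lt_or_eq with h0 | h0
      · have hw0 := hw r ⟨h0, hr.2⟩
        have hc0 : 0 ≤ Real.cos φ := Real.cos_nonneg_of_mem_Icc ⟨by linarith [hφ.1], hφ.2⟩
        have harg : 0 ≤ r * Real.cos φ * a := by positivity
        have hs := Real.sin_le harg
        nlinarith [mul_nonneg (mul_nonneg (pow_nonneg h0.le 2) hw0) (sub_nonneg.mpr hs)]
      · simp [← h0]
  -- inner lower bound
  have hlower : ∀ φ ∈ Set.Icc (0:ℝ) (Real.pi/2),
      I3 * (Real.cos φ * a) - I5 * ((Real.cos φ * a) ^ 3 / 6)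
        ≤ ∫ r in (0:ℝ)..1, r ^ 2 * w r * Real.sin (r * Real.cos φ * a) := by
    intro φ hφ
    have hc0 : 0 ≤ Real.cos φ := Real.cos_nonneg_of_mem_Icc ⟨by linarith [hφ.1], hφ.2⟩
    have hcomb : IntervalIntegrable
        (fun r => r ^ 3 * w r * (Real.cos φ * a) - r ^ 5 * w r * ((Real.cos φ * a) ^ 3 / 6))
        volume 0 1 := (hI3.mul_const _).sub (hI5i.mul_const _)
    have step := intervalIntegral.integral_mono_on (by norm_num : (0:ℝ) ≤ 1) hcomb (hfint φ) ?_
    · rw [intervalIntegral.integral_sub (hI3.mul_const _) (hI5i.mul_const _),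
        intervalIntegral.integral_mul_const, intervalIntegral.integral_mul_const] at step
      exact step
    · intro r hr
      rcases hr.1.lt_or_eq with h0 | h0
      · have hw0 := hw r ⟨h0, hr.2⟩
        have harg : 0 ≤ r * Real.cos φ * a := by positivity
        have hs := my_sin_ge_sub_cube harg
        nlinarith [mul_nonneg (mul_nonneg (pow_nonneg h0.le 2) hw0) (sub_nonneg.mpr hs)]
      · simp [← h0]
  -- outer integrability
  have hGint : IntervalIntegrable (fun φ => Real.cos φ * Real.sin φ *
      ∫ r in (0:ℝ)..1, r ^ 2 * w r * Real.sin (r * Real.cos φ * a)) volume 0 (Real.pi/2) :=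
    ((Real.continuous_cos.mul Real.continuous_sin).mul hFcont).intervalIntegrable _ _
  have hpi2 : (0:ℝ) ≤ Real.pi / 2 := by linarith
  -- outer upper bound
  have houter_up : (∫ φ in (0:ℝ)..(Real.pi/2), Real.cos φ * Real.sin φ *
      ∫ r in (0:ℝ)..1, r ^ 2 * w r * Real.sin (r * Real.cos φ * a)) ≤ I3 * a / 3 := by
    have hcont2 : Continuous (fun φ => Real.cos φ ^ 2 * Real.sin φ * (I3 * a)) :=
      ((Real.continuous_cos.pow 2).mul Real.continuous_sin).mul continuous_const
    have step := intervalIntegral.integral_mono_on hpi2 hGint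
      (hcont2.intervalIntegrable _ _) ?_
    · rw [intervalIntegral.integral_mul_const, my_int_cos2_sin] at step
      linarith
    · intro φ hφ
      have hc0 : 0 ≤ Real.cos φ := Real.cos_nonneg_of_mem_Icc ⟨by linarith [hφ.1], hφ.2⟩
      have hs0 : 0 ≤ Real.sin φ := Real.sin_nonneg_of_nonneg_of_le_pi hφ.1 (by linarith [hφ.2])
      have h := mul_le_mul_of_nonneg_left (hupper φ hφ) (mul_nonneg hc0 hs0)
      calc Real.cos φ * Real.sin φ *
            ∫ r in (0:ℝ)..1, r ^ 2 * w r * Real.sin (r * Real.cos φ * a)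
          ≤ Real.cos φ * Real.sin φ * (I3 * (Real.cos φ * a)) := h
        _ = Real.cos φ ^ 2 * Real.sin φ * (I3 * a) := by ring
  -- outer lower bound
  have houter_lo : I3 * a / 3 - I5 * a ^ 3 / 30 ≤
      ∫ φ in (0:ℝ)..(Real.pi/2), Real.cos φ * Real.sin φ *
        ∫ r in (0:ℝ)..1, r ^ 2 * w r * Real.sin (r * Real.cos φ * a) := by
    have hcont2 : Continuous (fun φ => Real.cos φ ^ 2 * Real.sin φ * (I3 * a)
        - Real.cos φ ^ 4 * Real.sin φ * (I5 * a ^ 3 / 6)) :=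
      (((Real.continuous_cos.pow 2).mul Real.continuous_sin).mul continuous_const).sub
        (((Real.continuous_cos.pow 4).mul Real.continuous_sin).mul continuous_const)
    have step := intervalIntegral.integral_mono_on hpi2
      (hcont2.intervalIntegrable _ _) hGint ?_
    · rw [intervalIntegral.integral_sub
        (f := fun u => Real.cos u ^ 2 * Real.sin u * (I3 * a))
        (g := fun u => Real.cos u ^ 4 * Real.sin u * (I5 * a ^ 3 / 6))
        ((Continuous.intervalIntegrable (((Real.continuous_cos.pow 2).mul
          Real.continuous_sin).mul continuous_const) _ _))
        ((Continuous.intervalIntegrable (((Real.continuous_cos.pow 4).mul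
          Real.continuous_sin).mul continuous_const) _ _)),
        intervalIntegral.integral_mul_const, intervalIntegral.integral_mul_const,
        my_int_cos2_sin, my_int_cos4_sin] at step
      calc I3 * a / 3 - I5 * a ^ 3 / 30
          = 1/3 * (I3 * a) - 1/5 * (I5 * a ^ 3 / 6) := by ring
        _ ≤ _ := step
    · intro φ hφ
      have hc0 : 0 ≤ Real.cos φ := Real.cos_nonneg_of_mem_Icc ⟨by linarith [hφ.1], hφ.2⟩
      have hs0 : 0 ≤ Real.sin φ := Real.sin_nonneg_of_nonneg_of_le_pi hφ.1 (by linarith [hφ.2])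
      have h := mul_le_mul_of_nonneg_left (hlower φ hφ) (mul_nonneg hc0 hs0)
      calc Real.cos φ ^ 2 * Real.sin φ * (I3 * a)
            - Real.cos φ ^ 4 * Real.sin φ * (I5 * a ^ 3 / 6)
          = Real.cos φ * Real.sin φ *
              (I3 * (Real.cos φ * a) - I5 * ((Real.cos φ * a) ^ 3 / 6)) := by ring
        _ ≤ _ := h
  -- final assembly
  have hposc : 0 < 4 * Real.pi / δ := by positivity
  have h5le3 : 4 * Real.pi * I5 ≤ 3 := by rw [← hnorm]; exact hmom
  have heq1 : 4 * Real.pi / δ * (I3 * a / 3) = ‖ξ‖ := by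
    rw [ha_def]
    field_simp
    linear_combination hnorm
  have heq2 : 4 * Real.pi / δ * (I3 * a / 3 - I5 * a ^ 3 / 30)
      = ‖ξ‖ - (4 * Real.pi * I5) * (a ^ 2 * ‖ξ‖) / 30 := by
    rw [ha_def]
    field_simp
    ring_nf
    linear_combination 30 * hnorm
  refine ⟨?_, ?_, ?_⟩
  · have := mul_le_mul_of_nonneg_left houter_up hposc.le
    rw [heq1] at this
    exact this
  · have h := mul_le_mul_of_nonneg_left houter_lo hposc.le
    rw [heq2] at h
    have hnn : 0 ≤ a ^ 2 * ‖ξ‖ := by positivity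
    have : ‖ξ‖ - a ^ 2 * ‖ξ‖ / 10 ≤ ‖ξ‖ - (4 * Real.pi * I5) * (a ^ 2 * ‖ξ‖) / 30 := by
      nlinarith [mul_nonneg (sub_nonneg.mpr h5le3) hnn]
    linarith
  · nlinarith [hξpos, hξ0, hξ1]
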